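/- arXiv:2504.13795 — 2 statements merged into one kernel-verified Lean document; each statement's English description precedes it below -/
import Mathlib

section
/- There is a constant C > 0 such that for all ξ with 0 < |ξ| ≤ 1, the series ∑_{n=1}^∞ (ξ^{2n}/(4^n n!)) ∫₀^{1/|ξ|} (1+t²)^{-1/2} t^{2n} dt converges and is bounded by C. -/
open intervalIntegral Real

private lemma cont_integrand (m : ℕ) : Continuous (fun t : ℝ => t^m / Real.sqrt (1 + t^2)) := by
  apply Continuous.div (continuous_pow m)
  · exact Real.continuous_sqrt.comp (by continuity)
  · intro t
    have h : (0:ℝ) < 1 + t^2 := by positivity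
    exact ne_of_gt (Real.sqrt_pos.mpr h)

private lemma term_nonneg (ξ : ℝ) (n : ℕ) (h1 : 0 < |ξ|) :
    0 ≤ ξ^(2*(n+1)) / (4^(n+1) * (Nat.factorial (n+1) : ℝ)) *
      ∫ t in (0:ℝ)..(1/|ξ|), t^(2*(n+1)) / Real.sqrt (1 + t^2) := by
  apply mul_nonneg
  · apply div_nonneg
    · rw [pow_mul]; positivity
    · positivity
  · apply intervalIntegral.integral_nonneg (div_nonneg zero_le_one (abs_nonneg _))
    intro t ht
    exact div_nonneg (pow_nonneg ht.1 _) (Real.sqrt_nonneg _)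

private lemma term_le (ξ : ℝ) (n : ℕ) (h1 : 0 < |ξ|) (h2 : |ξ| ≤ 1) :
    ξ^(2*(n+1)) / (4^(n+1) * (Nat.factorial (n+1) : ℝ)) *
      ∫ t in (0:ℝ)..(1/|ξ|), t^(2*(n+1)) / Real.sqrt (1 + t^2) ≤ (1/4:ℝ)^(n+1) := by
  set a : ℝ := 1/|ξ| with ha
  have ha0 : 0 < a := by positivity
  have hIle : (∫ t in (0:ℝ)..a, t^(2*(n+1)) / Real.sqrt (1 + t^2))
      ≤ ∫ t in (0:ℝ)..a, t^(2*n+1) := by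
    apply intervalIntegral.integral_mono_on ha0.le
    · exact (cont_integrand _).intervalIntegrable _ _
    · exact (continuous_pow _).intervalIntegrable _ _
    · intro t ht
      have ht0 : 0 ≤ t := ht.1
      have hs : 0 < Real.sqrt (1 + t^2) := Real.sqrt_pos.mpr (by positivity)
      rw [div_le_iff₀ hs]
      have hts : t ≤ Real.sqrt (1 + t^2) := by
        have h := Real.sqrt_le_sqrt (show t^2 ≤ 1 + t^2 by linarith)
        rwa [Real.sqrt_sq ht0] at h
      calc t^(2*(n+1)) = t^(2*n+1) * t := by ring
        _ ≤ t^(2*n+1) * Real.sqrt (1 + t^2) := by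
            apply mul_le_mul_of_nonneg_left hts (by positivity)
  have hIval : (∫ t in (0:ℝ)..a, t^(2*n+1)) = a^(2*n+2) / (2*n+2) := by
    rw [integral_pow, zero_pow (by omega : 2*n+1+1 ≠ 0)]
    push_cast
    ring
  have hIval' : (∫ t in (0:ℝ)..a, t^(2*n+1)) ≤ a^(2*(n+1)) := by
    rw [hIval]
    have : (1:ℝ) ≤ 2*n+2 := by
      have := Nat.cast_nonneg (α := ℝ) n; linarith
    calc a^(2*n+2) / (2*n+2) ≤ a^(2*n+2) := div_le_self (pow_nonneg ha0.le _) this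
      _ = a^(2*(n+1)) := by ring_nf
  have hI : (∫ t in (0:ℝ)..a, t^(2*(n+1)) / Real.sqrt (1 + t^2)) ≤ a^(2*(n+1)) :=
    hIle.trans hIval'
  have hI0 : 0 ≤ ∫ t in (0:ℝ)..a, t^(2*(n+1)) / Real.sqrt (1 + t^2) := by
    apply intervalIntegral.integral_nonneg ha0.le
    intro t ht
    exact div_nonneg (pow_nonneg ht.1 _) (Real.sqrt_nonneg _)
  have hx2 : ξ^(2*(n+1)) = |ξ|^(2*(n+1)) := by
    rw [← abs_pow, abs_of_nonneg (by rw [pow_mul]; positivity)]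
  have hfac : (1:ℝ) ≤ (Nat.factorial (n+1) : ℝ) := by
    exact_mod_cast Nat.one_le_iff_ne_zero.mpr (Nat.factorial_ne_zero _)
  have hxnn : 0 ≤ ξ^(2*(n+1)) := by rw [pow_mul]; positivity
  have key : ξ^(2*(n+1)) * (∫ t in (0:ℝ)..a, t^(2*(n+1)) / Real.sqrt (1 + t^2)) ≤ 1 := by
    calc ξ^(2*(n+1)) * (∫ t in (0:ℝ)..a, t^(2*(n+1)) / Real.sqrt (1 + t^2))
        ≤ ξ^(2*(n+1)) * a^(2*(n+1)) := mul_le_mul_of_nonneg_left hI hxnn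
      _ = (|ξ| * a)^(2*(n+1)) := by rw [hx2, mul_pow]
      _ = 1 := by rw [ha, mul_one_div, div_self (ne_of_gt h1), one_pow]
  have h4 : (0:ℝ) < 4^(n+1) * (Nat.factorial (n+1) : ℝ) := by positivity
  rw [div_mul_eq_mul_div, div_le_iff₀ h4]
  calc ξ^(2*(n+1)) * (∫ t in (0:ℝ)..a, t^(2*(n+1)) / Real.sqrt (1 + t^2)) ≤ 1 := key
    _ ≤ (1/4:ℝ)^(n+1) * (4^(n+1) * (Nat.factorial (n+1) : ℝ)) := by
        have h14 : (1/4:ℝ)^(n+1) * 4^(n+1) = 1 := by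
          rw [← mul_pow]; norm_num
        rw [← mul_assoc, h14, one_mul]
        exact hfac

set_option maxHeartbeats 1000000 in
theorem stmt4 : ∃ C : ℝ, 0 < C ∧ ∀ ξ : ℝ, 0 < |ξ| → |ξ| ≤ 1 →
    Summable (fun n : ℕ => ξ^(2*(n+1)) / (4^(n+1) * (Nat.factorial (n+1) : ℝ)) *
      ∫ t in (0:ℝ)..(1/|ξ|), t^(2*(n+1)) / Real.sqrt (1 + t^2)) ∧
    (∑' n : ℕ, ξ^(2*(n+1)) / (4^(n+1) * (Nat.factorial (n+1) : ℝ)) *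
      ∫ t in (0:ℝ)..(1/|ξ|), t^(2*(n+1)) / Real.sqrt (1 + t^2)) ≤ C := by
  refine ⟨2, by norm_num, fun ξ h1 h2 => ?_⟩
  have hgeo : Summable (fun n : ℕ => (1/4:ℝ)^n) :=
    summable_geometric_of_lt_one (by norm_num) (by norm_num)
  have hgsum : Summable (fun n : ℕ => (1/4:ℝ)^(n+1)) := by
    simpa [pow_succ] using hgeo.mul_right (4⁻¹ : ℝ)
  have hsum : Summable (fun n : ℕ => ξ^(2*(n+1)) / (4^(n+1) * (Nat.factorial (n+1) : ℝ)) *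
      ∫ t in (0:ℝ)..(1/|ξ|), t^(2*(n+1)) / Real.sqrt (1 + t^2)) :=
    Summable.of_nonneg_of_le (fun n => term_nonneg ξ n h1) (fun n => term_le ξ n h1 h2) hgsum
  refine ⟨hsum, ?_⟩
  calc (∑' n : ℕ, ξ^(2*(n+1)) / (4^(n+1) * (Nat.factorial (n+1) : ℝ)) *
      ∫ t in (0:ℝ)..(1/|ξ|), t^(2*(n+1)) / Real.sqrt (1 + t^2))
      ≤ ∑' n : ℕ, (1/4:ℝ)^(n+1) := Summable.tsum_le_tsum (fun n => term_le ξ n h1 h2) hsum hgsum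
    _ ≤ ∑' n : ℕ, (1/4:ℝ)^n :=
        Summable.tsum_le_tsum (fun n => pow_le_pow_of_le_one (by norm_num) (by norm_num) (Nat.le_succ n))
          hgsum hgeo
    _ = (1 - 1/4)⁻¹ := tsum_geometric_of_lt_one (by norm_num) (by norm_num)
    _ ≤ 2 := by norm_num
end

section
/- Define K̂(ξ) = (1/√2) ∫₀^∞ (1+t²)^{-1/2} exp(-ξ²(1+t²)/4) dt. Then there exists C > 0 such that for all ξ with 0 < |ξ| ≤ 1, |K̂(ξ) - (1/√2) log(1/|ξ|)| ≤ C. -/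
noncomputable def Khat (ξ : ℝ) : ℝ :=
  (1 / Real.sqrt 2) * ∫ t in Set.Ioi (0:ℝ), (1 / Real.sqrt (1 + t^2)) * Real.exp (-ξ^2 * (1 + t^2) / 4)

open MeasureTheory Set Real Filter Topology

set_option maxHeartbeats 1000000 in
set_option maxRecDepth 8000 in
theorem stmt7 : ∃ C : ℝ, 0 < C ∧ ∀ ξ : ℝ, 0 < |ξ| → |ξ| ≤ 1 →
    |Khat ξ - (1 / Real.sqrt 2) * Real.log (1/|ξ|)| ≤ C := by
  refine ⟨5, by norm_num, fun ξ hξ0 hξ1 => ?_⟩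
  set a := |ξ| with ha
  set T := a⁻¹ with hTdef
  have ha0 : 0 < a := hξ0
  have hT0 : 0 < T := by positivity
  have haT : a * T = 1 := mul_inv_cancel₀ (ne_of_gt ha0)
  have hT1 : 1 ≤ T := by nlinarith [mul_nonneg (sub_nonneg.2 hξ1) hT0.le]
  have hξ2 : ξ ^ 2 = a ^ 2 := (sq_abs ξ).symm
  have hξne : ξ ≠ 0 := abs_pos.mp hξ0
  clear_value a T
  set f : ℝ → ℝ := fun t => (1 / Real.sqrt (1 + t^2)) * Real.exp (-ξ^2 * (1 + t^2) / 4)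
    with hf
  have hsq : ∀ t : ℝ, (0:ℝ) < 1 + t ^ 2 := fun t => by positivity
  have hcont : Continuous f := by
    apply Continuous.mul
    · apply Continuous.div continuous_const
      · exact Real.continuous_sqrt.comp (by fun_prop)
      · exact fun t => ne_of_gt (Real.sqrt_pos.2 (hsq t))
    · exact Real.continuous_exp.comp (by fun_prop)
  have hf0 : ∀ t : ℝ, 0 ≤ f t := fun t => by
    have := Real.sqrt_nonneg (1 + t^2); positivity
  -- pointwise basic bounds
  have hsqrt_ge_one : ∀ t : ℝ, (1:ℝ) ≤ Real.sqrt (1 + t^2) := fun t => by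
    exact (Real.le_sqrt (by norm_num) (by positivity)).2 (by nlinarith [sq_nonneg t])
  have hle_one : ∀ t : ℝ, f t ≤ Real.exp (-ξ^2 * (1 + t^2) / 4) := fun t => by
    have h1 : 1 / Real.sqrt (1 + t^2) ≤ 1 := by
      rw [div_le_one (Real.sqrt_pos.2 (hsq t))]; exact hsqrt_ge_one t
    calc f t ≤ 1 * Real.exp (-ξ^2 * (1 + t^2) / 4) :=
          mul_le_mul_of_nonneg_right h1 (Real.exp_nonneg _)
      _ = _ := one_mul _
  -- integrability
  have hint : IntegrableOn f (Ioi 0) := by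
    have hg : Integrable (fun t : ℝ => Real.exp (-(ξ^2/4) * t^2)) :=
      integrable_exp_neg_mul_sq (by positivity)
    refine Integrable.mono' (hg.restrict (s := Ioi 0))
      hcont.aestronglyMeasurable.restrict (ae_of_all _ fun t => ?_)
    rw [Real.norm_eq_abs, abs_of_nonneg (hf0 t)]
    calc f t ≤ Real.exp (-ξ^2 * (1 + t^2) / 4) := hle_one t
      _ ≤ Real.exp (-(ξ^2/4) * t^2) := by
          apply Real.exp_le_exp.2; nlinarith [sq_nonneg ξ, sq_nonneg t, sq_nonneg (ξ*t)]
  -- splitting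
  have hintT : IntegrableOn f (Ioc 0 T) := hint.mono_set Ioc_subset_Ioi_self
  have hint01 : IntegrableOn f (Ioc 0 1) := hintT.mono_set (Ioc_subset_Ioc le_rfl hT1)
  have hint1T : IntegrableOn f (Ioc 1 T) :=
    hintT.mono_set (Ioc_subset_Ioc (by norm_num) le_rfl)
  have hintIoiT : IntegrableOn f (Ioi T) := hint.mono_set (Ioi_subset_Ioi hT0.le)
  have hsplit1 : ∫ t in Ioi (0:ℝ), f t = (∫ t in Ioc 0 T, f t) + ∫ t in Ioi T, f t := by
    rw [← setIntegral_union Ioc_disjoint_Ioi_same measurableSet_Ioi hintT hintIoiT,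
      Ioc_union_Ioi_eq_Ioi hT0.le]
  have hsplit2 : ∫ t in Ioc (0:ℝ) T, f t = (∫ t in Ioc 0 1, f t) + ∫ t in Ioc 1 T, f t := by
    rw [← setIntegral_union (Ioc_disjoint_Ioc_of_le le_rfl) measurableSet_Ioc hint01 hint1T,
      Ioc_union_Ioc_eq_Ioc (by norm_num) hT1]
  have hlogT0 : 0 ≤ Real.log T := Real.log_nonneg hT1
  -- bound on Ioc 0 1
  have hB1 : ∫ t in Ioc (0:ℝ) 1, f t ≤ 1 := by
    calc ∫ t in Ioc (0:ℝ) 1, f t ≤ ∫ _t in Ioc (0:ℝ) 1, (1:ℝ) := by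
          refine setIntegral_mono_on hint01 (integrableOn_const measure_Ioc_lt_top.ne)
            measurableSet_Ioc fun t _ => ?_
          calc f t ≤ Real.exp (-ξ^2 * (1 + t^2) / 4) := hle_one t
            _ ≤ 1 := Real.exp_le_one_iff.2 (by nlinarith [sq_nonneg ξ, sq_nonneg t, sq_nonneg (ξ*t)])
      _ = 1 := by simp
  -- bound on Ioc 1 T from above
  have hB2 : ∫ t in Ioc (1:ℝ) T, f t ≤ Real.log T := by
    have hinv : IntegrableOn (fun t : ℝ => 1 / t) (Ioc 1 T) := by
      refine (ContinuousOn.integrableOn_Icc ?_).mono_set Ioc_subset_Icc_self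
      refine ContinuousOn.div continuousOn_const continuousOn_id fun t ht => ?_
      have : (1:ℝ) ≤ t := ht.1
      positivity
    calc ∫ t in Ioc (1:ℝ) T, f t ≤ ∫ t in Ioc (1:ℝ) T, 1 / t := by
          refine setIntegral_mono_on hint1T hinv measurableSet_Ioc fun t ht => ?_
          have ht1 : (1:ℝ) ≤ t := le_of_lt ht.1
          have ht0 : (0:ℝ) < t := by linarith
          have hs : t ≤ Real.sqrt (1 + t^2) :=
            (Real.le_sqrt ht0.le (by positivity)).2 (by nlinarith)
          calc f t ≤ (1 / Real.sqrt (1 + t^2)) * 1 := by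
                refine mul_le_mul_of_nonneg_left (Real.exp_le_one_iff.2 ?_) (by positivity)
                nlinarith [sq_nonneg ξ, sq_nonneg t, sq_nonneg (ξ*t)]
            _ = 1 / Real.sqrt (1 + t^2) := mul_one _
            _ ≤ 1 / t := one_div_le_one_div_of_le ht0 hs
      _ = Real.log T := by
          rw [← intervalIntegral.integral_of_le hT1, integral_one_div, div_one]
          rw [Set.uIcc_of_le hT1]
          intro h0
          exact absurd h0.1 (by norm_num)
  -- bound on Ioi T
  have hB3 : ∫ t in Ioi T, f t ≤ 4 := by
    set g : ℝ → ℝ := fun t => a * Real.exp (-(a/4) * t) with hg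
    have hgint : ∀ x : ℝ, IntegrableOn g (Ioi x) := fun x =>
      (exp_neg_integrableOn_Ioi x (by positivity : (0:ℝ) < a/4)).const_mul a
    have hg0 : ∀ t : ℝ, 0 ≤ g t := fun t => by positivity
    have step1 : ∫ t in Ioi T, f t ≤ ∫ t in Ioi T, g t := by
      refine setIntegral_mono_on hintIoiT (hgint T) measurableSet_Ioi fun t ht => ?_
      have hTt : T < t := ht
      have ht0 : (0:ℝ) < t := lt_of_lt_of_le hT0 hTt.le
      have hs : t ≤ Real.sqrt (1 + t^2) :=
        (Real.le_sqrt ht0.le (by positivity)).2 (by nlinarith)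
      have h1 : 1 / Real.sqrt (1 + t^2) ≤ 1 / t := one_div_le_one_div_of_le ht0 hs
      have h2 : 1 / t ≤ a := by
        rw [div_le_iff₀ ht0]
        calc (1:ℝ) = a * T := haT.symm
          _ ≤ a * t := mul_le_mul_of_nonneg_left hTt.le ha0.le
      have hat1 : 1 ≤ a * t := by
        calc (1:ℝ) = a * T := haT.symm
          _ ≤ a * t := mul_le_mul_of_nonneg_left hTt.le ha0.le
      have h3 : Real.exp (-ξ^2 * (1 + t^2) / 4) ≤ Real.exp (-(a/4) * t) := by
        apply Real.exp_le_exp.2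
        have : a * t ≤ (a*t) * (a*t) := le_mul_of_one_le_left (by positivity) hat1
        rw [hξ2]
        nlinarith [sq_nonneg a, sq_nonneg (a*t)]
      calc f t ≤ (1/t) * Real.exp (-ξ^2 * (1 + t^2) / 4) :=
            mul_le_mul_of_nonneg_right h1 (Real.exp_nonneg _)
        _ ≤ a * Real.exp (-(a/4) * t) :=
            mul_le_mul h2 h3 (Real.exp_nonneg _) ha0.le
    have step2 : ∫ t in Ioi T, g t ≤ ∫ t in Ioi (0:ℝ), g t :=
      setIntegral_mono_set (hgint 0) (ae_of_all _ hg0)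
        (HasSubset.Subset.eventuallyLE (Ioi_subset_Ioi hT0.le))
    have step3 : ∫ t in Ioi (0:ℝ), g t = 4 := by
      have hderiv : ∀ x ∈ Ici (0:ℝ), HasDerivAt (fun t => -4 * Real.exp (-(a/4) * t)) (g x) x := by
        intro x _
        have h1 : HasDerivAt (fun t : ℝ => -(a/4) * t) (-(a/4)) x := by
          simpa using (hasDerivAt_id x).const_mul (-(a/4))
        have h2 := (h1.exp).const_mul (-4 : ℝ)
        refine h2.congr_deriv ?_
        simp [hg]; ring
      have htend : Tendsto (fun t : ℝ => -4 * Real.exp (-(a/4) * t)) atTop (𝓝 0) := by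
        have h1 : Tendsto (fun t : ℝ => (a/4) * t) atTop atTop :=
          Tendsto.const_mul_atTop (by positivity) tendsto_id
        have h2 : Tendsto (fun t : ℝ => Real.exp (-((a/4) * t))) atTop (𝓝 0) :=
          Real.tendsto_exp_neg_atTop_nhds_zero.comp h1
        have h3 : Tendsto (fun t : ℝ => -4 * Real.exp (-((a/4) * t))) atTop (𝓝 (-4 * 0)) :=
          h2.const_mul (-4)
        simpa [neg_mul] using h3
      have := integral_Ioi_of_hasDerivAt_of_tendsto' hderiv (hgint 0) htend
      rw [this]
      norm_num
    calc ∫ t in Ioi T, f t ≤ ∫ t in Ioi T, g t := step1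
      _ ≤ ∫ t in Ioi (0:ℝ), g t := step2
      _ = 4 := step3
  -- lower bound on Ioc 1 T
  have hLow : Real.log T - 2 ≤ ∫ t in Ioc (1:ℝ) T, f t := by
    set g2 : ℝ → ℝ := fun t => 1/(1+t) - ξ^2/4 * (1+t) with hg2
    have hg2cont : ContinuousOn g2 (Icc 1 T) := by
      apply ContinuousOn.sub
      · refine ContinuousOn.div continuousOn_const (by fun_prop) fun t ht => ?_
        have : (1:ℝ) ≤ t := ht.1
        positivity
      · fun_prop
    have hg2int : IntegrableOn g2 (Ioc 1 T) :=
      (hg2cont.integrableOn_Icc).mono_set Ioc_subset_Icc_self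
    have hptwise : ∀ t ∈ Ioc (1:ℝ) T, g2 t ≤ f t := by
      intro t ht
      have ht1 : (1:ℝ) ≤ t := le_of_lt ht.1
      have htT : t ≤ T := ht.2
      have ht0 : (0:ℝ) < 1 + t := by linarith
      have hat : a * t ≤ 1 := by
        calc a * t ≤ a * T := mul_le_mul_of_nonneg_left htT ha0.le
          _ = 1 := haT
      have hxle : ξ^2 * (1 + t^2) / 4 ≤ 1/2 := by
        rw [hξ2]
        nlinarith [sq_nonneg a, sq_nonneg (a*t), sq_abs ξ, hξ1, mul_pos ha0 (lt_of_lt_of_le one_pos ht1)]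
      have hexp : 1 - ξ^2 * (1 + t^2) / 4 ≤ Real.exp (-ξ^2 * (1 + t^2) / 4) := by
        have := Real.add_one_le_exp (-ξ^2 * (1 + t^2) / 4)
        linarith
      have hs : Real.sqrt (1 + t^2) ≤ 1 + t :=
        (Real.sqrt_le_left ht0.le).2 (by nlinarith)
      have hs0 : (0:ℝ) < Real.sqrt (1 + t^2) := Real.sqrt_pos.2 (hsq t)
      have h1 : 1/(1+t) ≤ 1 / Real.sqrt (1 + t^2) := one_div_le_one_div_of_le hs0 hs
      have stepa : g2 t ≤ (1/(1+t)) * (1 - ξ^2 * (1 + t^2) / 4) := by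
        have key : (1/(1+t)) * (1 - ξ^2 * (1 + t^2) / 4) - g2 t
            = ξ^2 * (2*t) / (4*(1+t)) := by
          rw [hg2]
          field_simp
          ring
        have hpos : 0 ≤ ξ^2 * (2*t) / (4*(1+t)) := by positivity
        linarith
      have stepb : (1/(1+t)) * (1 - ξ^2 * (1 + t^2) / 4)
          ≤ (1 / Real.sqrt (1 + t^2)) * (1 - ξ^2 * (1 + t^2) / 4) :=
        mul_le_mul_of_nonneg_right h1 (by linarith)
      have stepc : (1 / Real.sqrt (1 + t^2)) * (1 - ξ^2 * (1 + t^2) / 4) ≤ f t :=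
        mul_le_mul_of_nonneg_left hexp (by positivity)
      exact le_trans stepa (le_trans stepb stepc)
    have hmono : ∫ t in Ioc (1:ℝ) T, g2 t ≤ ∫ t in Ioc (1:ℝ) T, f t :=
      setIntegral_mono_on hg2int hint1T measurableSet_Ioc hptwise
    -- compute the integral of g2
    have hval : ∫ t in Ioc (1:ℝ) T, g2 t
        = (Real.log (1+T) - ξ^2/4 * (T + T^2/2)) - (Real.log 2 - ξ^2/4 * (1 + 1/2)) := by
      rw [← intervalIntegral.integral_of_le hT1]
      have hFTC := intervalIntegral.integral_eq_sub_of_hasDerivAt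
        (f := fun t : ℝ => Real.log (1+t) - ξ^2/4 * (t + t^2/2)) (f' := g2)
        (a := 1) (b := T) ?_ ?_
      · rw [hFTC]; norm_num
      · intro t ht
        rw [Set.uIcc_of_le hT1] at ht
        have ht1 : (1:ℝ) ≤ t := ht.1
        have ht0 : (0:ℝ) < 1 + t := by linarith
        have hd1 : HasDerivAt (fun t : ℝ => Real.log (1+t)) (1/(1+t)) t := by
          have h := (HasDerivAt.log ((hasDerivAt_id t).const_add 1) (ne_of_gt ht0))
          simpa using h
        have hd2 : HasDerivAt (fun t : ℝ => ξ^2/4 * (t + t^2/2)) (ξ^2/4 * (1+t)) t := by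
          have h := ((hasDerivAt_id t).add ((hasDerivAt_pow 2 t).div_const 2)).const_mul (ξ^2/4)
          refine h.congr_deriv ?_
          norm_num
        exact hd1.sub hd2
      · exact (hg2cont.mono (by rw [Set.uIcc_of_le hT1])).intervalIntegrable
    have hest : Real.log T - 2
        ≤ (Real.log (1+T) - ξ^2/4 * (T + T^2/2)) - (Real.log 2 - ξ^2/4 * (1 + 1/2)) := by
      have e1 : Real.log T ≤ Real.log (1+T) := Real.log_le_log hT0 (by linarith)
      have e2 : Real.log 2 ≤ 0.7 := by
        have := Real.log_two_lt_d9
        linarith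
      have e3 : ξ^2/4 * (T + T^2/2) - ξ^2/4 * (1 + 1/2) ≤ 3/8 := by
        rw [hξ2]
        have h1 : a^2 * T = a := by
          rw [sq]; rw [mul_assoc, haT, mul_one]
        have h2 : a^2 * T^2 = 1 := by
          rw [sq, sq]; calc a*a*(T*T) = (a*T)*(a*T) := by ring
            _ = 1 := by rw [haT]; ring
        nlinarith [sq_nonneg a, ha0.le, hξ1]
      linarith
    linarith
  -- assemble
  have hA1pos : 0 ≤ ∫ t in Ioc (0:ℝ) 1, f t :=
    setIntegral_nonneg measurableSet_Ioc fun t _ => hf0 t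
  have hBpos : 0 ≤ ∫ t in Ioi T, f t :=
    setIntegral_nonneg measurableSet_Ioi fun t _ => hf0 t
  set I := ∫ t in Ioi (0:ℝ), f t with hI
  have hIlow : Real.log T - 2 ≤ I := by
    rw [hsplit1, hsplit2]; linarith
  have hIhigh : I ≤ Real.log T + 5 := by
    rw [hsplit1, hsplit2]; linarith
  have hlogeq : Real.log (1/a) = Real.log T := by rw [one_div, ← hTdef]
  have hKhat : Khat ξ = (1 / Real.sqrt 2) * I := rfl
  rw [hKhat, hlogeq, ← mul_sub, abs_mul]
  have hs2 : (1:ℝ) ≤ Real.sqrt 2 :=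
    (Real.le_sqrt (by norm_num) (by norm_num)).2 (by norm_num)
  have habs1 : |1 / Real.sqrt 2| ≤ 1 := by
    rw [abs_of_nonneg (by positivity)]
    rw [div_le_one (by linarith)]
    exact hs2
  have habs2 : |I - Real.log T| ≤ 5 := abs_le.2 ⟨by linarith, by linarith⟩
  calc |1 / Real.sqrt 2| * |I - Real.log T| ≤ 1 * 5 :=
        mul_le_mul habs1 habs2 (abs_nonneg _) one_pos.le
    _ = 5 := one_mul 5
end
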